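/- arXiv:1510.00627 — 2 statements merged into one kernel-verified Lean document; each statement's English description precedes it below -/
import Mathlib

section
/- Suppose that for every player k the per-round realized internal regret vanishes, i.e., R^k_{Int,n}/n → 0 as n → ∞. Then for every ε > 0 there exists N such that for all n ≥ N the empirical distribution μ̂_n is an ε-correlated equilibrium, i.e., for every player k and all m, l ∈ A_k: Σ_{a : a_k = m} μ̂_n(a)·(u_k(a[k↦l]) − u_k(a)) ≤ ε. -/
/-- If every player's per-round realized internal regret vanishes, then
for every `ε > 0` the empirical distribution of play is eventually an `ε`-correlated
equilibrium. -/
theorem empirical_eventually_eps_correlated_equilibrium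
    {K : Type*} [Fintype K] [DecidableEq K]
    (A : K → Type*) [∀ k, Fintype (A k)] [∀ k, DecidableEq (A k)] [∀ k, Nonempty (A k)]
    (u : ∀ k : K, (∀ j, A j) → ℝ)
    (play : ℕ → ∀ j, A j)
    (hreg : ∀ k : K,
      Filter.Tendsto
        (fun n : ℕ =>
          (⨆ p : A k × A k, ∑ t ∈ Finset.Icc 1 n,
            (if play t k = p.1 then
              u k (Function.update (play t) k p.2) - u k (play t) else 0)) / (n : ℝ))
        Filter.atTop (nhds 0)) :
    ∀ ε > (0 : ℝ), ∃ N : ℕ, ∀ n ≥ N, ∀ (k : K) (m l : A k),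
      ∑ a ∈ Finset.univ.filter (fun a : ∀ j, A j => a k = m),
          ((1 / (n : ℝ)) * ((Finset.Icc 1 n).filter (fun t => play t = a)).card) *
            (u k (Function.update a k l) - u k a) ≤ ε := by
  intro ε hε
  have h : ∀ᶠ n : ℕ in Filter.atTop, ∀ k : K,
      (⨆ p : A k × A k, ∑ t ∈ Finset.Icc 1 n,
        (if play t k = p.1 then
          u k (Function.update (play t) k p.2) - u k (play t) else 0)) / (n : ℝ) < ε := by
    rw [Filter.eventually_all]
    exact fun k => (hreg k).eventually_lt_const hε
  obtain ⟨N, hN⟩ := Filter.eventually_atTop.1 h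
  refine ⟨max N 1, fun n hn k m l => ?_⟩
  have hn1 : 1 ≤ n := le_trans (le_max_right _ _) hn
  have hnN := hN n (le_trans (le_max_left _ _) hn) k
  have hnpos : (0 : ℝ) < n := by exact_mod_cast Nat.lt_of_lt_of_le Nat.zero_lt_one hn1
  set g : (∀ j, A j) → ℝ := fun a => u k (Function.update a k l) - u k a with hg
  have key : ∑ a ∈ Finset.univ.filter (fun a : ∀ j, A j => a k = m),
      ((1 / (n : ℝ)) * ((Finset.Icc 1 n).filter (fun t => play t = a)).card) * g a
      = (∑ t ∈ Finset.Icc 1 n,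
          (if play t k = m then u k (Function.update (play t) k l) - u k (play t) else 0))
        / (n : ℝ) := by
    have hsum : ∑ a ∈ Finset.univ.filter (fun a : ∀ j, A j => a k = m),
        (((Finset.Icc 1 n).filter (fun t => play t = a)).card : ℝ) * g a
        = ∑ t ∈ Finset.Icc 1 n,
          (if play t k = m then u k (Function.update (play t) k l) - u k (play t) else 0) := by
      simp_rw [Finset.card_filter, Nat.cast_sum, Finset.sum_mul, apply_ite (Nat.cast : ℕ → ℝ),
        Nat.cast_one, Nat.cast_zero, ite_mul, one_mul, zero_mul]
      rw [Finset.sum_comm]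
      refine Finset.sum_congr rfl fun t _ => ?_
      simp_rw [eq_comm (a := play t)]
      rw [Finset.sum_ite_eq' (Finset.univ.filter (fun a : ∀ j, A j => a k = m)) (play t) g]
      simp [hg]
    rw [← hsum, Finset.sum_div]
    refine Finset.sum_congr rfl fun a _ => ?_
    ring
  rw [key]
  refine le_trans ?_ (le_of_lt hnN)
  apply (div_le_div_iff_of_pos_right hnpos).2
  exact le_ciSup (f := fun p : A k × A k => ∑ t ∈ Finset.Icc 1 n,
      (if play t k = p.1 then u k (Function.update (play t) k p.2) - u k (play t) else 0))
    (Set.Finite.bddAbove (Set.finite_range _)) (⟨m, l⟩ : A k × A k)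
end

section
/- Suppose that for every player k the per-round realized internal regret vanishes, i.e., R^k_{Int,n}/n → 0 as n → ∞. Then every cluster point (limit of a convergent subsequence) of the sequence of empirical distributions (μ̂_n)_{n≥1}, viewed as points of the finite-dimensional probability simplex over ∏_j A_j, is a correlated equilibrium of the game. -/
open Filter Topology Finset

/-- If `x` is a cluster point of `s` and eventually `s n ≤ b n` with `b → L`, then `x ≤ L`. -/
lemma clusterPt_le_of_le {x L : ℝ} {s b : ℕ → ℝ} (h : MapClusterPt x atTop s)
    (hsb : ∀ᶠ n in atTop, s n ≤ b n) (hb : Tendsto b atTop (𝓝 L)) : x ≤ L := by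
  by_contra hx
  push_neg at hx
  have h1 : ∀ᶠ n in atTop, b n < (L + x) / 2 := hb.eventually (eventually_lt_nhds (by linarith))
  have h2 : ∃ᶠ n in atTop, s n ∈ Set.Ioi ((L + x) / 2) :=
    (mapClusterPt_iff_frequently.mp h) _ (Ioi_mem_nhds (by linarith))
  obtain ⟨n, hn1, hn2, hn3⟩ := (h2.and_eventually (h1.and hsb)).exists
  simp only [Set.mem_Ioi] at hn1
  linarith

lemma clusterPt_ge_of_ge {x L : ℝ} {s b : ℕ → ℝ} (h : MapClusterPt x atTop s)
    (hsb : ∀ᶠ n in atTop, b n ≤ s n) (hb : Tendsto b atTop (𝓝 L)) : L ≤ x := by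
  have : -x ≤ -L := by
    refine clusterPt_le_of_le (s := fun n => -(s n)) (b := fun n => -(b n)) ?_
      (hsb.mono fun n h => by simpa) (hb.neg)
    have := MapClusterPt.continuousAt_comp (f := fun y : ℝ => -y) (by fun_prop) h
    simpa [Function.comp_def] using this
  linarith

/-- A probability distribution `σ` on the set of joint action profiles is a correlated
equilibrium if for every player `k` and pair of actions `m, l ∈ A k`, the swap-gain of
`σ` from `m` to `l` is nonpositive. -/
def IsCorrelatedEquilibrium {K : Type*} [Fintype K] [DecidableEq K]
    (A : K → Type*) [∀ k, Fintype (A k)] [∀ k, DecidableEq (A k)]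
    (u : ∀ k : K, (∀ j, A j) → ℝ) (σ : (∀ j, A j) → ℝ) : Prop :=
  (∀ a, 0 ≤ σ a) ∧ (∑ a : ∀ j, A j, σ a = 1) ∧
    ∀ (k : K) (m l : A k),
      ∑ a ∈ Finset.univ.filter (fun a : ∀ j, A j => a k = m),
        σ a * (u k (Function.update a k l) - u k a) ≤ 0

/-- If every player's per-round realized internal regret vanishes, then
every cluster point of the sequence of empirical distributions of play is a correlated
equilibrium of the game. -/
theorem clusterPt_of_empirical_isCorrelatedEquilibrium
    {K : Type*} [Fintype K] [DecidableEq K]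
    (A : K → Type*) [∀ k, Fintype (A k)] [∀ k, DecidableEq (A k)] [∀ k, Nonempty (A k)]
    (u : ∀ k : K, (∀ j, A j) → ℝ)
    (play : ℕ → ∀ j, A j)
    (hreg : ∀ k : K,
      Filter.Tendsto
        (fun n : ℕ =>
          (⨆ p : A k × A k, ∑ t ∈ Finset.Icc 1 n,
            (if play t k = p.1 then
              u k (Function.update (play t) k p.2) - u k (play t) else 0)) / (n : ℝ))
        Filter.atTop (nhds 0))
    (σ : (∀ j, A j) → ℝ)
    (hσ : MapClusterPt σ Filter.atTop
      (fun n : ℕ => fun a : ∀ j, A j =>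
        (1 / (n : ℝ)) * ((Finset.Icc 1 n).filter (fun t => play t = a)).card)) :
    IsCorrelatedEquilibrium A u σ := by
  set f : ℕ → (∀ j, A j) → ℝ := fun n a =>
    (1 / (n : ℝ)) * ((Finset.Icc 1 n).filter (fun t => play t = a)).card with hf
  -- key counting identity: fiberwise decomposition of sums over time
  have key : ∀ (n : ℕ) (g : (∀ j, A j) → ℝ),
      ∑ a : ∀ j, A j, f n a * g a
        = (1 / (n : ℝ)) * ∑ t ∈ Finset.Icc 1 n, g (play t) := by
    intro n g
    rw [Finset.mul_sum, ← Finset.sum_fiberwise' (Finset.Icc 1 n) play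
      (fun a => (1 / (n : ℝ)) * g a)]
    refine Finset.sum_congr rfl fun a _ => ?_
    rw [Finset.sum_const, nsmul_eq_mul, hf]
    ring
  refine ⟨?_, ?_, ?_⟩
  · -- nonnegativity
    intro a
    have hc : ContinuousAt (fun σ' : (∀ j, A j) → ℝ => σ' a) σ := (continuous_apply a).continuousAt
    have hcp : MapClusterPt (σ a) atTop ((fun σ' : (∀ j, A j) → ℝ => σ' a) ∘ f) :=
      hσ.tendsto_comp hc
    refine clusterPt_ge_of_ge (b := fun _ => (0 : ℝ)) hcp ?_ tendsto_const_nhds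
    filter_upwards with n
    simp only [Function.comp, hf]
    positivity
  · -- sums to one
    have hc : ContinuousAt (fun σ' : (∀ j, A j) → ℝ => ∑ a : ∀ j, A j, σ' a) σ :=
      (continuous_finset_sum _ fun a _ => continuous_apply a).continuousAt
    have h1 : ∀ᶠ n in atTop, (fun m => ∑ a : ∀ j, A j, f m a) n = 1 := by
      filter_upwards [eventually_ge_atTop 1] with n hn
      have := key n (fun _ => 1)
      simp only [mul_one] at this
      rw [this, Finset.sum_const, Nat.card_Icc]
      have : (n : ℝ) ≠ 0 := by positivity
      field_simp
      simp
    have hcp : MapClusterPt (∑ a : ∀ j, A j, σ a) atTop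
        ((fun σ' : (∀ j, A j) → ℝ => ∑ a : ∀ j, A j, σ' a) ∘ f) := hσ.tendsto_comp hc
    have hle := clusterPt_le_of_le hcp (h1.mono fun n h => h.le) tendsto_const_nhds
    have hge := clusterPt_ge_of_ge hcp (h1.mono fun n h => h.ge) tendsto_const_nhds
    linarith
  · -- swap-gain condition
    intro k m l
    set g : (∀ j, A j) → ℝ := fun a => if a k = m then u k (Function.update a k l) - u k a else 0
      with hg
    have hc : ContinuousAt (fun σ' : (∀ j, A j) → ℝ =>
        ∑ a ∈ Finset.univ.filter (fun a : ∀ j, A j => a k = m),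
          σ' a * (u k (Function.update a k l) - u k a)) σ :=
      (continuous_finset_sum _ fun a _ => (continuous_apply a).mul continuous_const).continuousAt
    have hcp : MapClusterPt
        (∑ a ∈ Finset.univ.filter (fun a : ∀ j, A j => a k = m),
          σ a * (u k (Function.update a k l) - u k a)) atTop
        ((fun σ' : (∀ j, A j) → ℝ =>
          ∑ a ∈ Finset.univ.filter (fun a : ∀ j, A j => a k = m),
            σ' a * (u k (Function.update a k l) - u k a)) ∘ f) := hσ.tendsto_comp hc
    refine clusterPt_le_of_le hcp ?_ (hreg k)
    filter_upwards [eventually_ge_atTop 1] with n hn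
    have hrw : ∑ a ∈ Finset.univ.filter (fun a : ∀ j, A j => a k = m),
          f n a * (u k (Function.update a k l) - u k a)
        = (1 / (n : ℝ)) * ∑ t ∈ Finset.Icc 1 n, g (play t) := by
      rw [Finset.sum_filter, ← key n g]
      refine Finset.sum_congr rfl fun a _ => ?_
      by_cases h : a k = m <;> simp [hg, h]
    simp only [Function.comp]
    rw [hrw]
    have hb : ∑ t ∈ Finset.Icc 1 n, g (play t)
        ≤ ⨆ p : A k × A k, ∑ t ∈ Finset.Icc 1 n,
            (if play t k = p.1 then u k (Function.update (play t) k p.2) - u k (play t) else 0) := by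
      have := le_ciSup (f := fun p : A k × A k => ∑ t ∈ Finset.Icc 1 n,
          (if play t k = p.1 then u k (Function.update (play t) k p.2) - u k (play t) else 0))
        (Set.Finite.bddAbove (Set.finite_range _)) (m, l)
      simpa [hg] using this
    have hn' : 0 ≤ (1 / (n : ℝ)) := by positivity
    calc (1 / (n : ℝ)) * ∑ t ∈ Finset.Icc 1 n, g (play t)
        ≤ (1 / (n : ℝ)) * _ := by exact mul_le_mul_of_nonneg_left hb hn'
      _ = _ / (n : ℝ) := by rw [one_div, inv_mul_eq_div]
end
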